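/- Let P_(·) be an irreducible G-stochastic function defined on A with gcd(A) = 1, and let d̂ be the common period of all states. Then there exists a partition {G_0, …, G_{d̂−1}} of G such that for every word 𝐛 and all states i, j: if P_𝐛(i,j) > 0 and i ∈ G_h, then j ∈ G_l where l ≡ h + s(𝐛) (mod d̂). -/

import Mathlib

open MeasureTheory
open scoped BigOperators

/-- The matrix of a word `𝐚 = (a_1, …, a_n)` (encoded as a list `[a_1, …, a_n]`),
namely `P_𝐚 = P_(a_n) ⋯ P_(a_1)`, so that `wordK P l i j` is the `(i,j)` entry. -/
noncomputable def wordK {G : Type*} [Fintype G] [DecidableEq G]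
    (P : ℕ → G → G → ℝ) : List ℕ → G → G → ℝ
  | [] => fun i j => if i = j then 1 else 0
  | a :: l => fun i j => ∑ m, wordK P l i m * P a m j

/-- A word over the alphabet `A`: a nonempty finite tuple with entries in `A`. -/
def IsWord (A : Set ℕ) (l : List ℕ) : Prop := l ≠ [] ∧ ∀ a ∈ l, a ∈ A

/-- `i` communicates with `j` if `P_𝐚(i,j) > 0` for some word `𝐚`. -/
def Communicates {G : Type*} [Fintype G] [DecidableEq G]
    (A : Set ℕ) (P : ℕ → G → G → ℝ) (i j : G) : Prop :=
  ∃ l : List ℕ, IsWord A l ∧ 0 < wordK P l i j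

/-- `i` and `j` intercommunicate (every state intercommunicates with itself). -/
def Intercommunicates {G : Type*} [Fintype G] [DecidableEq G]
    (A : Set ℕ) (P : ℕ → G → G → ℝ) (i j : G) : Prop :=
  i = j ∨ (Communicates A P i j ∧ Communicates A P j i)

/-- An intercommunicating class: an equivalence class of the intercommunication relation. -/
def IsInterClass {G : Type*} [Fintype G] [DecidableEq G]
    (A : Set ℕ) (P : ℕ → G → G → ℝ) (C : Set G) : Prop :=
  ∃ i : G, C = {j | Intercommunicates A P i j}

/-- A set `C` is closed if whenever `i ∈ C` communicates with `j`, then `j ∈ C`. -/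
def IsClosedClass {G : Type*} [Fintype G] [DecidableEq G]
    (A : Set ℕ) (P : ℕ → G → G → ℝ) (C : Set G) : Prop :=
  ∀ i ∈ C, ∀ j : G, Communicates A P i j → j ∈ C

/-- `d` is the greatest common divisor of the set `S ⊆ ℕ`. -/
def IsGCDOfSet (S : Set ℕ) (d : ℕ) : Prop :=
  (∀ n ∈ S, d ∣ n) ∧ ∀ e : ℕ, (∀ n ∈ S, e ∣ n) → e ∣ d

/-- The set of depths `s(𝐚)` of words `𝐚` with `P_𝐚(i,i) > 0`. -/
def ReturnDepths {G : Type*} [Fintype G] [DecidableEq G]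
    (A : Set ℕ) (P : ℕ → G → G → ℝ) (i : G) : Set ℕ :=
  {s | ∃ l : List ℕ, IsWord A l ∧ 0 < wordK P l i i ∧ l.sum = s}

/-- `E` is measurable with respect to the coordinates `(x_m)_{m < n}`. -/
def PastMeasurable {G : Type*} [MeasurableSpace G] (n : ℤ) (E : Set (ℤ → G)) : Prop :=
  MeasurableSet[MeasurableSpace.comap
    (fun x : ℤ → G => fun m : {m : ℤ // m < n} => x m.1) MeasurableSpace.pi] E

/-- `μ` is compatible with the imitation kernel
`p(g | w_{-1}, w_{-2}, …) = ∑_{k ∈ A} θ_k P_(k)(w_{-k}, g)` (here `θ` vanishes off `A`). -/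
def Compatible {G : Type*} [MeasurableSpace G] (θ : ℕ → ℝ) (P : ℕ → G → G → ℝ)
    (μ : Measure (ℤ → G)) : Prop :=
  ∀ (n : ℤ) (g : G) (E : Set (ℤ → G)), PastMeasurable n E →
    (μ (E ∩ {x | x n = g})).toReal
      = ∫ x in E, (∑' k : ℕ, θ k * P k (x (n - (k : ℤ))) g) ∂μ

lemma wordK_nonneg {G : Type*} [Fintype G] [DecidableEq G]
    (A : Set ℕ) (P : ℕ → G → G → ℝ)
    (hPnn : ∀ k ∈ A, ∀ i j : G, 0 ≤ P k i j) :
    ∀ l : List ℕ, (∀ a ∈ l, a ∈ A) → ∀ i j : G, 0 ≤ wordK P l i j := by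
  intro l
  induction l with
  | nil => intro _ i j; simp only [wordK]; split <;> norm_num
  | cons a l ih =>
    intro hl i j
    simp only [wordK]
    apply Finset.sum_nonneg
    intro m _
    exact mul_nonneg (ih (fun b hb => hl b (List.mem_cons_of_mem _ hb)) i m)
      (hPnn a (hl a List.mem_cons_self) m j)

lemma wordK_append {G : Type*} [Fintype G] [DecidableEq G]
    (P : ℕ → G → G → ℝ) (l m : List ℕ) (i j : G) :
    wordK P (l ++ m) i j = ∑ k, wordK P m i k * wordK P l k j := by
  induction l generalizing j with
  | nil => simp [wordK]
  | cons a l ih =>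
    calc wordK P ((a :: l) ++ m) i j = ∑ t, wordK P (l ++ m) i t * P a t j := rfl
      _ = ∑ t, (∑ k, wordK P m i k * wordK P l k t) * P a t j :=
          Finset.sum_congr rfl fun t _ => by rw [ih]
      _ = ∑ k, wordK P m i k * wordK P (a :: l) k j := by
          simp only [wordK, Finset.sum_mul, Finset.mul_sum]
          rw [Finset.sum_comm]
          exact Finset.sum_congr rfl fun k _ => Finset.sum_congr rfl fun t _ => by ring

/-- the cyclic decomposition `{G_0, …, G_{d̂−1}}`: if
`P_𝐛(i,j) > 0` and `i ∈ G_h` then `j ∈ G_{h + s(𝐛) mod d̂}`. -/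
theorem stmt_7 {G : Type*} [Fintype G] [DecidableEq G] [Nonempty G]
    (A : Set ℕ) (hA : A.Nonempty) (hApos : ∀ k ∈ A, 0 < k)
    (P : ℕ → G → G → ℝ)
    (hPnn : ∀ k ∈ A, ∀ i j : G, 0 ≤ P k i j)
    (hProw : ∀ k ∈ A, ∀ i : G, ∑ j, P k i j = 1)
    (hirr : ∀ i j : G, Communicates A P i j)
    (hgcdA : IsGCDOfSet A 1)
    (dhat : ℕ) (hdhat : 0 < dhat)
    (hper : ∀ i : G, IsGCDOfSet (ReturnDepths A P i) dhat) :
    ∃ Gp : Fin dhat → Set G,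
      (∀ x : G, ∃! h : Fin dhat, x ∈ Gp h) ∧
      (∀ l : List ℕ, IsWord A l → ∀ i j : G, 0 < wordK P l i j →
        ∀ h : Fin dhat, i ∈ Gp h →
          j ∈ Gp ⟨(h.1 + l.sum) % dhat, Nat.mod_lt _ hdhat⟩) := by
  classical
  obtain ⟨i0⟩ := ‹Nonempty G›
  -- the candidate partition
  set Gp : Fin dhat → Set G := fun h =>
    {j | ∃ l : List ℕ, IsWord A l ∧ 0 < wordK P l i0 j ∧ l.sum % dhat = h.1} with hGp
  have hnn : ∀ l : List ℕ, (∀ a ∈ l, a ∈ A) → ∀ i j : G, 0 ≤ wordK P l i j :=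
    wordK_nonneg A P hPnn
  -- key composition lemma
  have hcomp : ∀ (l m : List ℕ), IsWord A l → IsWord A m → ∀ i j k : G,
      0 < wordK P m i k → 0 < wordK P l k j → 0 < wordK P (l ++ m) i j := by
    intro l m hl hm i j k h1 h2
    rw [wordK_append]
    refine Finset.sum_pos' (fun t _ => mul_nonneg (hnn m hm.2 i t) (hnn l hl.2 t j)) ?_
    exact ⟨k, Finset.mem_univ k, mul_pos h1 h2⟩
  have hword_append : ∀ l m : List ℕ, IsWord A l → IsWord A m → IsWord A (l ++ m) := by
    intro l m hl hm
    refine ⟨by simp [hl.1], fun a ha => ?_⟩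
    rcases List.mem_append.1 ha with h | h
    · exact hl.2 a h
    · exact hm.2 a h
  -- uniqueness of the residue: any two words i0 → x have the same sum mod dhat
  have huniq : ∀ x : G, ∀ l m : List ℕ, IsWord A l → IsWord A m →
      0 < wordK P l i0 x → 0 < wordK P m i0 x → l.sum % dhat = m.sum % dhat := by
    intro x l m hl hm hlp hmp
    obtain ⟨t, ht, htp⟩ := hirr x i0
    have h1 : dhat ∣ (t ++ l).sum := by
      refine (hper i0).1 _ ⟨t ++ l, hword_append t l ht hl, ?_, rfl⟩
      exact hcomp t l ht hl i0 i0 x hlp htp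
    have h2 : dhat ∣ (t ++ m).sum := by
      refine (hper i0).1 _ ⟨t ++ m, hword_append t m ht hm, ?_, rfl⟩
      exact hcomp t m ht hm i0 i0 x hmp htp
    simp only [List.sum_append] at h1 h2
    have h1' : t.sum + l.sum ≡ 0 [MOD dhat] := Nat.modEq_zero_iff_dvd.2 h1
    have h2' : t.sum + m.sum ≡ 0 [MOD dhat] := Nat.modEq_zero_iff_dvd.2 h2
    exact Nat.ModEq.add_left_cancel' t.sum (h1'.trans h2'.symm)
  refine ⟨Gp, ?_, ?_⟩
  · intro x
    obtain ⟨l, hl, hlp⟩ := hirr i0 x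
    refine ⟨⟨l.sum % dhat, Nat.mod_lt _ hdhat⟩, ⟨l, hl, hlp, rfl⟩, ?_⟩
    rintro ⟨h, hh⟩ ⟨m, hm, hmp, hms⟩
    have h2 := huniq x m l hm hl hmp hlp
    simp only [Fin.val_mk] at hms
    exact Fin.ext (hms.symm.trans h2)
  · rintro l hl i j hij h ⟨m, hm, hmp, hms⟩
    refine ⟨l ++ m, hword_append l m hl hm, hcomp l m hl hm i0 j i hmp hij, ?_⟩
    simp only [List.sum_append, Fin.val_mk]
    rw [← hms, Nat.mod_add_mod, Nat.add_comm]
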